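/- For every forest 𝓕 on S, the ideals I_𝓕 and J_𝓕 of ℤ_𝓕 are equal; in particular ℤ_𝓕/I_𝓕 = ℤ_𝓕/J_𝓕. -/

import Mathlib

variable {α : Type*} [DecidableEq α]

/-- The set of elements of `L` that are maximal in `L` under `T`. -/
def maxUnder (L : Finset (Finset α)) (T : Finset α) : Finset (Finset α) :=
  L.filter fun U => U ⊂ T ∧ ∀ V ∈ L, ¬ (U ⊂ V ∧ V ⊂ T)

/-- A forest on `S`. -/
def IsForest (S : Finset α) (F : Finset (Finset α)) : Prop :=
  (∀ T ∈ F, T ⊆ S) ∧ (∀ T ∈ F, 2 ≤ T.card) ∧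
    ∀ U ∈ F, ∀ T ∈ F, U ⊆ T ∨ T ⊆ U ∨ U ∩ T = ∅

/-- `m(F, T) = (|T| - 1) - Σ_{U ∈ M(F,T)} (|U| - 1)` (a natural number for forests). -/
def mNat (F : Finset (Finset α)) (T : Finset α) : ℕ :=
  T.card - 1 - ∑ U ∈ maxUnder F T, (U.card - 1)

noncomputable section

/-- The generator `y_T^{m(F,T)} ∏_{U ∈ M(F,T)} (y_T − y_U)` of the ideal `I_F`. -/
def relI (F : Finset (Finset α)) (T : ↥F) : MvPolynomial ↥F ℤ :=
  MvPolynomial.X T ^ mNat F T.1 *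
    ∏ U ∈ (maxUnder F T.1).attach,
      (MvPolynomial.X T - MvPolynomial.X (⟨U.1, (Finset.mem_filter.mp U.2).1⟩ : ↥F))

/-- The ideal `I_F ⊆ ℤ_F`. -/
def idealI (F : Finset (Finset α)) : Ideal (MvPolynomial ↥F ℤ) :=
  Ideal.span (Set.range (relI F))

/-- The generator `y_T^{(|T|−1) − Σ_{U ∈ Us}(|U|−1)} ∏_{U ∈ Us} (y_T − y_U)`
of the ideal `J_F`. -/
def relJ (F : Finset (Finset α)) (T : ↥F) (Us : Finset ↥F) : MvPolynomial ↥F ℤ :=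
  MvPolynomial.X T ^ (T.1.card - 1 - ∑ U ∈ Us, (U.1.card - 1)) *
    ∏ U ∈ Us, (MvPolynomial.X T - MvPolynomial.X U)

/-- The ideal `J_F ⊆ ℤ_F`, generated by the relations attached to all
(possibly empty) sets `Us ⊆ F` of pairwise disjoint proper subsets of `T ∈ F`. -/
def idealJ (F : Finset (Finset α)) : Ideal (MvPolynomial ↥F ℤ) :=
  Ideal.span {P | ∃ (T : ↥F) (Us : Finset ↥F),
    (∀ U ∈ Us, U.1 ⊂ T.1) ∧
    (∀ U ∈ Us, ∀ V ∈ Us, U ≠ V → U.1 ∩ V.1 = ∅) ∧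
    P = relJ F T Us}

/-! ### Auxiliary lemmas -/

open MvPolynomial

lemma mem_maxUnder' {L : Finset (Finset α)} {T U : Finset α} :
    U ∈ maxUnder L T ↔ U ∈ L ∧ U ⊂ T ∧ ∀ V ∈ L, ¬ (U ⊂ V ∧ V ⊂ T) := by
  simp [maxUnder, and_assoc]

/-- Distinct maximal elements under `T` are disjoint. -/
lemma maxUnder_disjoint {S : Finset α} {F : Finset (Finset α)} (hF : IsForest S F)
    {T U V : Finset α} (hU : U ∈ maxUnder F T) (hV : V ∈ maxUnder F T) (hne : U ≠ V) :
    U ∩ V = ∅ := by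
  obtain ⟨hUF, hUT, hUmax⟩ := mem_maxUnder'.mp hU
  obtain ⟨hVF, hVT, hVmax⟩ := mem_maxUnder'.mp hV
  rcases hF.2.2 U hUF V hVF with h | h | h
  · exact absurd ⟨lt_of_le_of_ne h hne, hVT⟩ (hUmax V hVF)
  · exact absurd ⟨lt_of_le_of_ne h (Ne.symm hne), hUT⟩ (hVmax U hUF)
  · exact h

/-- Every proper subset of `T` in `F` is contained in a maximal element under `T`. -/
lemma exists_cover {S : Finset α} {F : Finset (Finset α)} (hF : IsForest S F)
    {T U : Finset α} (hU : U ∈ F) (hUT : U ⊂ T) :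
    ∃ V ∈ maxUnder F T, U ⊆ V := by
  classical
  set s : Finset (Finset α) := F.filter (fun V => U ⊆ V ∧ V ⊂ T) with hs
  have hUs : U ∈ s := by simp [hs, hU, hUT]
  obtain ⟨m, hm, hmax⟩ := s.exists_maximal ⟨U, hUs⟩
  rw [hs, Finset.mem_filter] at hm
  refine ⟨m, mem_maxUnder'.mpr ⟨hm.1, hm.2.2, ?_⟩, hm.2.1⟩
  rintro W hW ⟨hmW, hWT⟩
  exact hmW.2 (hmax (by simp [hs, hW, hm.2.1.trans hmW.subset, hWT]) hmW.1)

/-- Uniqueness of the maximal cover. -/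
lemma cover_unique {S : Finset α} {F : Finset (Finset α)} (hF : IsForest S F)
    {T U V W : Finset α} (hUne : U.Nonempty)
    (hV : V ∈ maxUnder F T) (hW : W ∈ maxUnder F T) (hUV : U ⊆ V) (hUW : U ⊆ W) :
    V = W := by
  by_contra hne
  have h := maxUnder_disjoint hF hV hW hne
  obtain ⟨x, hx⟩ := hUne
  have : x ∈ V ∩ W := Finset.mem_inter.mpr ⟨hUV hx, hUW hx⟩
  simp [h] at this

/-- Sum of `card − 1` over a pairwise disjoint family of nonempty subsets of `V`. -/
lemma sum_card_sub_one_le {ι : Type*} {V : Finset α} {s : Finset ι} {f : ι → Finset α}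
    (hsub : ∀ i ∈ s, f i ⊆ V) (hcard : ∀ i ∈ s, 1 ≤ (f i).card)
    (hdisj : ∀ i ∈ s, ∀ j ∈ s, i ≠ j → f i ∩ f j = ∅) :
    ∑ i ∈ s, ((f i).card - 1) ≤ V.card - 1 := by
  classical
  rcases s.eq_empty_or_nonempty with rfl | hne
  · simp
  have hdisj' : ∀ i ∈ s, ∀ j ∈ s, i ≠ j → Disjoint (f i) (f j) := by
    intro i hi j hj hij
    exact Finset.disjoint_iff_inter_eq_empty.mpr (hdisj i hi j hj hij)
  have h1 : (s.biUnion f).card = ∑ i ∈ s, (f i).card := Finset.card_biUnion hdisj'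
  have h2 : s.biUnion f ⊆ V := by
    intro x hx
    obtain ⟨i, hi, hxi⟩ := Finset.mem_biUnion.mp hx
    exact hsub i hi hxi
  have h3 : ∑ i ∈ s, (f i).card ≤ V.card := h1 ▸ Finset.card_le_card h2
  have h4 : ∑ i ∈ s, (f i).card = ∑ i ∈ s, ((f i).card - 1) + s.card := by
    rw [Finset.card_eq_sum_ones s, ← Finset.sum_add_distrib]
    exact Finset.sum_congr rfl fun i hi => by have := hcard i hi; omega
  have h5 : 1 ≤ s.card := Finset.card_pos.mpr hne
  omega

/-- Substitution lemma: `d` divides `p - aeval f p` whenever `d` divides `X i - f i`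
for every `i`. -/
lemma dvd_sub_aeval {σ : Type*} (f : σ → MvPolynomial σ ℤ) (d : MvPolynomial σ ℤ)
    (hf : ∀ i, d ∣ (X i - f i)) (p : MvPolynomial σ ℤ) :
    d ∣ (p - aeval f p) := by
  induction p using MvPolynomial.induction_on with
  | C a => simp [MvPolynomial.aeval_C, MvPolynomial.algebraMap_eq]
  | add p q hp hq =>
      have h : p + q - aeval f (p + q)
          = (p - aeval f p) + (q - aeval f q) := by
        rw [map_add]; ring
      rw [h]; exact dvd_add hp hq
  | mul_X p i hp =>
      have h : p * X i - aeval f (p * X i)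
          = p * (X i - f i) + (p - aeval f p) * f i := by
        rw [map_mul, aeval_X]; ring
      rw [h]
      exact dvd_add ((hf i).mul_left p) (hp.mul_right _)

/-- The key lemma: every `J`-generator lies in `I`. -/
lemma relJ_mem_idealI {S : Finset α} {F : Finset (Finset α)} (hF : IsForest S F) :
    ∀ (n : ℕ) (T : ↥F), T.1.card ≤ n → ∀ Us : Finset ↥F,
      (∀ U ∈ Us, U.1 ⊂ T.1) →
      (∀ U ∈ Us, ∀ V ∈ Us, U ≠ V → U.1 ∩ V.1 = ∅) →
      relJ F T Us ∈ idealI F := by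
  classical
  intro n
  induction n with
  | zero =>
      intro T hT
      have := hF.2.1 T.1 T.2
      omega
  | succ n IH =>
      intro T hTcard Us hUsub hUdisj
      have hMF : ∀ V ∈ maxUnder F T.1, V ∈ F := fun V hV => (mem_maxUnder'.mp hV).1
      have hMsubT : ∀ V ∈ maxUnder F T.1, V ⊂ T.1 :=
        fun V hV => (mem_maxUnder'.mp hV).2.1
      -- for each maximal element, the part of `Us` below it
      let Vf : {x // x ∈ maxUnder F T.1} → ↥F := fun u => ⟨u.1, hMF u.1 u.2⟩
      let Usf : {x // x ∈ maxUnder F T.1} → Finset ↥F :=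
        fun u => Us.filter (fun U => U.1 ⊆ u.1)
      have hUsfUs : ∀ u, Usf u ⊆ Us := fun u => Finset.filter_subset _ _
      have hUsfsub : ∀ u U, U ∈ Usf u → U.1 ⊆ u.1 :=
        fun u U hU => (Finset.mem_filter.mp hU).2
      have hcardU : ∀ U : ↥F, 2 ≤ U.1.card := fun U => hF.2.1 U.1 U.2
      have hcover : ∀ U ∈ Us, ∃ u : {x // x ∈ maxUnder F T.1}, U ∈ Usf u := by
        intro U hU
        obtain ⟨V, hV, hUV⟩ := exists_cover hF U.2 (hUsub U hU)
        exact ⟨⟨V, hV⟩, Finset.mem_filter.mpr ⟨hU, hUV⟩⟩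
      have huniq : ∀ (U : ↥F) (u w : {x // x ∈ maxUnder F T.1}),
          U ∈ Usf u → U ∈ Usf w → u = w := by
        intro U u w hu hw
        have hUne : U.1.Nonempty := Finset.card_pos.mp (by have := hcardU U; omega)
        exact Subtype.ext (cover_unique hF hUne u.2 w.2 (hUsfsub u U hu) (hUsfsub w U hw))
      have hpart : Us = (maxUnder F T.1).attach.biUnion Usf := by
        ext U
        simp only [Finset.mem_biUnion, Finset.mem_attach, true_and]
        constructor
        · intro hU; exact hcover U hU
        · rintro ⟨u, hu⟩; exact hUsfUs u hu
      have hpdisj : ∀ u ∈ (maxUnder F T.1).attach, ∀ w ∈ (maxUnder F T.1).attach,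
          u ≠ w → Disjoint (Usf u) (Usf w) := by
        intro u _ w _ huw
        rw [Finset.disjoint_left]
        intro U hu hw
        exact huw (huniq U u w hu hw)
      -- numerical bookkeeping
      let v : {x // x ∈ maxUnder F T.1} → ℕ := fun u => u.1.card - 1
      let a : {x // x ∈ maxUnder F T.1} → ℕ := fun u => ∑ U ∈ Usf u, (U.1.card - 1)
      have hav : ∀ u, a u ≤ v u := by
        intro u
        refine sum_card_sub_one_le (f := fun U : ↥F => U.1) ?_ ?_ ?_
        · intro U hU; exact hUsfsub u U hU
        · intro U _; exact le_trans (by norm_num) (hcardU U)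
        · intro U hU W hW hUW
          exact hUdisj U (hUsfUs u hU) W (hUsfUs u hW) hUW
      have hvt : ∑ u ∈ (maxUnder F T.1).attach, v u ≤ T.1.card - 1 := by
        refine sum_card_sub_one_le (f := fun u : {x // x ∈ maxUnder F T.1} => u.1) ?_ ?_ ?_
        · intro u _; exact (hMsubT u.1 u.2).subset
        · intro u _; exact le_trans (by norm_num) (hF.2.1 u.1 (hMF u.1 u.2))
        · intro u _ w _ huw
          exact maxUnder_disjoint hF u.2 w.2 (fun h => huw (Subtype.ext h))
      have hsumA : ∑ U ∈ Us, (U.1.card - 1) = ∑ u ∈ (maxUnder F T.1).attach, a u := by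
        rw [hpart]
        exact Finset.sum_biUnion hpdisj
      have hmNat : mNat F T.1 = T.1.card - 1 - ∑ u ∈ (maxUnder F T.1).attach, v u := by
        rw [mNat, ← Finset.sum_attach (maxUnder F T.1) (fun V => V.card - 1)]
      have hexp : T.1.card - 1 - ∑ U ∈ Us, (U.1.card - 1)
          = mNat F T.1 + ∑ u ∈ (maxUnder F T.1).attach, (v u - a u) := by
        have h1 : ∑ u ∈ (maxUnder F T.1).attach, (v u - a u)
            + ∑ u ∈ (maxUnder F T.1).attach, a u
            = ∑ u ∈ (maxUnder F T.1).attach, v u := by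
          rw [← Finset.sum_add_distrib]
          exact Finset.sum_congr rfl fun u _ => Nat.sub_add_cancel (hav u)
        rw [hsumA, hmNat]
        omega
      -- the polynomial decomposition per maximal element
      let p : {x // x ∈ maxUnder F T.1} → MvPolynomial ↥F ℤ := fun u =>
        X T ^ (v u - a u) * ∏ U ∈ Usf u, (X T - X U)
      have hdecomp : ∀ u : {x // x ∈ maxUnder F T.1},
          ∃ q, p u - (X T - X (Vf u)) * q ∈ idealI F := by
        intro u
        by_cases hVin : Vf u ∈ Usf u
        · -- then `Usf u = {Vf u}`
          have hsingle : Usf u = {Vf u} := by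
            apply Finset.eq_singleton_iff_unique_mem.mpr
            refine ⟨hVin, fun U hU => ?_⟩
            by_contra hne
            have hdis := hUdisj U (hUsfUs u hU) (Vf u) (hUsfUs u hVin) hne
            have hsubu : U.1 ⊆ u.1 := hUsfsub u U hU
            have hce : U.1 ⊆ (∅ : Finset α) :=
              hdis ▸ Finset.subset_inter (subset_refl _) hsubu
            have hcU := hcardU U
            have : U.1.card = 0 := by
              rw [Finset.subset_empty.mp hce]; simp
            omega
          have hva : v u - a u = 0 := by
            show u.1.card - 1 - (∑ U ∈ Usf u, (U.1.card - 1)) = 0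
            rw [hsingle, Finset.sum_singleton]
            have hc : ((Vf u : ↥F) : Finset α).card = u.1.card := rfl
            rw [hc]
            omega
          refine ⟨1, ?_⟩
          have hpu : p u = (X T - X (Vf u)) * 1 := by
            show X T ^ (v u - a u) * ∏ U ∈ Usf u, (X T - X U) = _
            rw [hva, hsingle, Finset.prod_singleton, pow_zero, one_mul, mul_one]
          rw [hpu]
          simp
        · -- substitute `X T ↦ X (Vf u)`; the result is `relJ` for `Vf u`
          have hTne : ∀ U ∈ Usf u, U ≠ T := by
            intro U hU hUT
            have hsubu : U.1 ⊆ u.1 := hUsfsub u U hU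
            have hlt := hMsubT u.1 u.2
            rw [hUT] at hsubu
            exact hlt.2 hsubu
          let f : ↥F → MvPolynomial ↥F ℤ := fun i => if i = T then X (Vf u) else X i
          have hfd : ∀ i, (X T - X (Vf u) : MvPolynomial ↥F ℤ) ∣ (X i - f i) := by
            intro i
            by_cases h : i = T
            · subst h; simp [f]
            · simp [f, h]
          obtain ⟨q, hq⟩ := dvd_sub_aeval f (X T - X (Vf u)) hfd (p u)
          refine ⟨q, ?_⟩
          have haev : aeval f (p u) = relJ F (Vf u) (Usf u) := by
            show aeval f (X T ^ (v u - a u) * ∏ U ∈ Usf u, (X T - X U)) = _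
            rw [map_mul, map_pow, map_prod, relJ]
            have hfT : aeval f (X T : MvPolynomial ↥F ℤ) = X (Vf u) := by
              rw [aeval_X]; simp [f]
            have hfU : ∀ U ∈ Usf u, aeval f (X T - X U : MvPolynomial ↥F ℤ)
                = X (Vf u) - X U := by
              intro U hU
              rw [map_sub, aeval_X, aeval_X]
              simp [f, hTne U hU]
            rw [hfT, Finset.prod_congr rfl hfU]
          have hrelJ : relJ F (Vf u) (Usf u) ∈ idealI F := by
            refine IH (Vf u) ?_ (Usf u) ?_ ?_
            · have h1 := Finset.card_lt_card (hMsubT u.1 u.2)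
              show u.1.card ≤ n
              exact Nat.lt_succ_iff.mp (lt_of_lt_of_le h1 hTcard)
            · intro U hU
              refine lt_of_le_of_ne (hUsfsub u U hU) ?_
              intro h
              exact hVin (by rwa [show U = Vf u from Subtype.ext h] at hU)
            · intro U hU W hW hUW
              exact hUdisj U (hUsfUs u hU) W (hUsfUs u hW) hUW
          have hfin : p u - (X T - X (Vf u)) * q = aeval f (p u) := by
            rw [← hq]; ring
          rw [hfin, haev]
          exact hrelJ
      choose q hq using hdecomp
      let r : {x // x ∈ maxUnder F T.1} → MvPolynomial ↥F ℤ := fun u =>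
        p u - (X T - X (Vf u)) * q u
      have hrI : ∀ u, r u ∈ idealI F := hq
      have hpu : ∀ u, p u = r u + (X T - X (Vf u)) * q u := by
        intro u
        show p u = (p u - (X T - X (Vf u)) * q u) + (X T - X (Vf u)) * q u
        ring
      -- rewrite `relJ F T Us`
      have hrelJ : relJ F T Us
          = X T ^ mNat F T.1 * ∏ u ∈ (maxUnder F T.1).attach, p u := by
        rw [relJ, hexp, pow_add]
        have hprod : ∏ U ∈ Us, (X T - X U : MvPolynomial ↥F ℤ)
            = ∏ u ∈ (maxUnder F T.1).attach, ∏ U ∈ Usf u, (X T - X U) := by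
          rw [hpart]
          exact Finset.prod_biUnion hpdisj
        rw [hprod, mul_assoc]
        congr 1
        rw [← Finset.prod_pow_eq_pow_sum, ← Finset.prod_mul_distrib]
      have hrw : ∏ u ∈ (maxUnder F T.1).attach, p u
          = ∑ s ∈ (maxUnder F T.1).attach.powerset,
              (∏ u ∈ s, r u) * ∏ u ∈ (maxUnder F T.1).attach \ s,
                ((X T - X (Vf u)) * q u) := by
        rw [Finset.prod_congr rfl fun u _ => hpu u, Finset.prod_add]
      rw [hrelJ, hrw, Finset.mul_sum]
      refine Ideal.sum_mem _ ?_
      intro s hs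
      rcases s.eq_empty_or_nonempty with rfl | ⟨w, hw⟩
      · -- the term with no `r` factors is a multiple of `relI F T`
        have hrel : (X T ^ mNat F T.1 *
              ∏ u ∈ (maxUnder F T.1).attach, (X T - X (Vf u)) : MvPolynomial ↥F ℤ)
            = relI F T := rfl
        have heq : X T ^ mNat F T.1 * ((∏ u ∈ (∅ : Finset _), r u) *
              ∏ u ∈ (maxUnder F T.1).attach \ ∅, ((X T - X (Vf u)) * q u))
            = relI F T * ∏ u ∈ (maxUnder F T.1).attach, q u := by
          rw [Finset.prod_empty, Finset.sdiff_empty, one_mul,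
            Finset.prod_mul_distrib, ← hrel]
          ring
        rw [heq]
        exact Ideal.mul_mem_right _ _ (Ideal.subset_span ⟨T, rfl⟩)
      · -- the term contains the factor `r w ∈ I`
        have heq : X T ^ mNat F T.1 * ((∏ u ∈ s, r u) *
              ∏ u ∈ (maxUnder F T.1).attach \ s, ((X T - X (Vf u)) * q u))
            = r w * (X T ^ mNat F T.1 * (∏ u ∈ s.erase w, r u) *
              ∏ u ∈ (maxUnder F T.1).attach \ s, ((X T - X (Vf u)) * q u)) := by
          rw [← Finset.mul_prod_erase s r hw]
          ring
        rw [heq]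
        exact Ideal.mul_mem_right _ _ (hrI w)

/-- `I ⊆ J`. -/
lemma idealI_le_idealJ {S : Finset α} {F : Finset (Finset α)} (hF : IsForest S F) :
    idealI F ≤ idealJ F := by
  rw [idealI, Ideal.span_le]
  rintro P ⟨T, rfl⟩
  apply Ideal.subset_span
  let emb : {x // x ∈ maxUnder F T.1} ↪ ↥F :=
    ⟨fun u => ⟨u.1, (Finset.mem_filter.mp u.2).1⟩,
      fun u w h => Subtype.ext (congrArg (fun z : ↥F => z.1) h)⟩
  refine ⟨T, (maxUnder F T.1).attach.map emb, ?_, ?_, ?_⟩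
  · intro U hU
    obtain ⟨u, _, rfl⟩ := Finset.mem_map.mp hU
    exact (mem_maxUnder'.mp u.2).2.1
  · intro U hU V hV hUV
    obtain ⟨u, _, rfl⟩ := Finset.mem_map.mp hU
    obtain ⟨w, _, rfl⟩ := Finset.mem_map.mp hV
    exact maxUnder_disjoint hF u.2 w.2 fun h => hUV (congrArg emb (Subtype.ext h))
  · have hexp : T.1.card - 1 - ∑ U ∈ (maxUnder F T.1).attach.map emb, (U.1.card - 1)
        = mNat F T.1 := by
      rw [Finset.sum_map, mNat]
      congr 1
      rw [← Finset.sum_attach (maxUnder F T.1) (fun V => V.card - 1)]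
      rfl
    have hprod : ∏ U ∈ (maxUnder F T.1).attach.map emb,
          (X T - X U : MvPolynomial ↥F ℤ)
        = ∏ U ∈ (maxUnder F T.1).attach,
          (X T - X (⟨U.1, (Finset.mem_filter.mp U.2).1⟩ : ↥F)) := by
      rw [Finset.prod_map]
      rfl
    rw [relI, relJ, hexp, hprod]

/-- Lemma 5.1.15: for every forest `F` on `S`, `I_F = J_F`
(hence `ℤ_F/I_F = ℤ_F/J_F`). -/
theorem stmt13 (S : Finset α) (F : Finset (Finset α)) (hF : IsForest S F) :
    idealI F = idealJ F := by
  refine le_antisymm (idealI_le_idealJ hF) ?_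
  rw [idealJ, Ideal.span_le]
  rintro P ⟨T, Us, h1, h2, rfl⟩
  exact relJ_mem_idealI hF T.1.card T le_rfl Us h1 h2

end
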